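/- Let S₁, S₂ ∈ ℝ^{d×d} with S₂ = u vᵀ of rank 1. Suppose |vᵀ S₁^ℓ u| ≤ γ^{ℓ+1} for all ℓ ≥ 0, where 0 < γ < 1. Then for every word w = (S₁^{ℓ₁} S₂)(S₁^{ℓ₂} S₂)⋯(S₁^{ℓ_n} S₂) with ℓ_k ≥ 0, the spectral radius of the product is at most γ^{n + ℓ₁ + ⋯ + ℓ_n}. -/

import Mathlib

open Matrix

/-- The spectral radius of a real square matrix: the maximum of the moduli of its
complex eigenvalues. -/
noncomputable def specRad {d : ℕ} (A : Matrix (Fin d) (Fin d) ℝ) : ENNReal :=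
  spectralRadius ℂ (A.map (Complex.ofReal))

section aux

variable {d : ℕ}

lemma matMul_vecMulVec {R : Type*} [CommRing R] (M : Matrix (Fin d) (Fin d) R)
    (x y : Fin d → R) : M * vecMulVec x y = vecMulVec (M.mulVec x) y := by
  ext i j
  simp only [mul_apply, vecMulVec_apply, mulVec, dotProduct]
  rw [Finset.sum_mul]
  exact Finset.sum_congr rfl fun k _ => by ring

lemma vecMulVec_matMul_vecMulVec {R : Type*} [CommRing R] (x y z w : Fin d → R) :
    vecMulVec x y * vecMulVec z w = (y ⬝ᵥ z) • vecMulVec x w := by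
  ext i j
  simp only [mul_apply, vecMulVec_apply, Matrix.smul_apply, dotProduct, smul_eq_mul,
    Finset.sum_mul, Finset.mul_sum]
  refine Finset.sum_congr rfl fun k _ => by ring

/-- eigenvalue extraction: any spectral value of a matrix over ℂ has an eigenvector. -/
lemma exists_eigenvector {M : Matrix (Fin d) (Fin d) ℂ} {μ : ℂ}
    (hμ : μ ∈ spectrum ℂ M) : ∃ w : Fin d → ℂ, w ≠ 0 ∧ M.mulVec w = μ • w := by
  rw [spectrum.mem_iff] at hμ
  have hdet : (algebraMap ℂ (Matrix (Fin d) (Fin d) ℂ) μ - M).det = 0 := by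
    by_contra h
    exact hμ ((Matrix.isUnit_iff_isUnit_det _).2 (isUnit_iff_ne_zero.2 h))
  obtain ⟨w, hw0, hw⟩ := (Matrix.exists_mulVec_eq_zero_iff).2 hdet
  refine ⟨w, hw0, ?_⟩
  have h1 : (algebraMap ℂ (Matrix (Fin d) (Fin d) ℂ) μ).mulVec w - M.mulVec w = 0 := by
    rw [← Matrix.sub_mulVec, hw]
  have h2 : (algebraMap ℂ (Matrix (Fin d) (Fin d) ℂ) μ).mulVec w = μ • w := by
    rw [Algebra.algebraMap_eq_smul_one, Matrix.smul_mulVec, Matrix.one_mulVec]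
  rw [h2, sub_eq_zero] at h1
  exact h1.symm

/-- Spectral radius bound for a complex rank-one matrix. -/
lemma spectralRadius_vecMulVec_le (x y : Fin d → ℂ) :
    spectralRadius ℂ (vecMulVec x y) ≤ ‖y ⬝ᵥ x‖₊ := by
  refine iSup₂_le fun μ hμ => ?_
  obtain ⟨w, hw0, hw⟩ := exists_eigenvector hμ
  rcases eq_or_ne μ 0 with rfl | hμ0
  · simp
  have hmv : (vecMulVec x y).mulVec w = (y ⬝ᵥ w) • x := by
    ext i
    simp only [vecMulVec_apply, mulVec, dotProduct, Pi.smul_apply, smul_eq_mul,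
      Finset.sum_mul]
    exact Finset.sum_congr rfl fun k _ => by ring
  rw [hmv] at hw
  have hyw : y ⬝ᵥ w ≠ 0 := by
    intro h
    rw [h, zero_smul] at hw
    exact hw0 (smul_eq_zero.mp hw.symm |>.resolve_left hμ0)
  have h3 : (y ⬝ᵥ w) * (y ⬝ᵥ x) = μ * (y ⬝ᵥ w) := by
    have := congrArg (fun z => y ⬝ᵥ z) hw
    simpa [dotProduct_smul, smul_eq_mul] using this
  have hμeq : y ⬝ᵥ x = μ := mul_left_cancel₀ hyw (by rw [h3]; ring)
  rw [← hμeq]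

lemma vecMulVec_map (x y : Fin d → ℝ) :
    (vecMulVec x y).map (Complex.ofReal) =
      vecMulVec (fun i => (x i : ℂ)) (fun i => (y i : ℂ)) := by
  ext i j
  simp [vecMulVec_apply]

lemma specRad_vecMulVec_le (x y : Fin d → ℝ) :
    specRad (vecMulVec x y) ≤ ENNReal.ofReal |y ⬝ᵥ x| := by
  unfold specRad
  rw [vecMulVec_map]
  refine le_trans (spectralRadius_vecMulVec_le _ _) ?_
  have h : (fun i => (y i : ℂ)) ⬝ᵥ (fun i => (x i : ℂ)) = ((y ⬝ᵥ x : ℝ) : ℂ) := by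
    simp [dotProduct]
  rw [h, Complex.nnnorm_real, ← Real.norm_eq_abs]
  exact le_of_eq (ENNReal.ofReal_eq_coe_nnreal (norm_nonneg _)).symm

lemma specRad_one_le : specRad (1 : Matrix (Fin d) (Fin d) ℝ) ≤ 1 := by
  unfold specRad
  have h1 : (1 : Matrix (Fin d) (Fin d) ℝ).map Complex.ofReal = 1 := by
    ext i j
    by_cases h : i = j <;> simp [Matrix.one_apply, h]
  rw [h1]
  refine iSup₂_le fun μ hμ => ?_
  have : μ = 1 := by
    by_contra hne
    rw [spectrum.mem_iff] at hμ
    apply hμ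
    have h2 : algebraMap ℂ (Matrix (Fin d) (Fin d) ℂ) μ - 1 =
        algebraMap ℂ (Matrix (Fin d) (Fin d) ℂ) (μ - 1) := by
      simp [map_sub]
    rw [h2]
    exact (isUnit_iff_ne_zero.2 (sub_ne_zero.2 hne)).map _
  simp [this]

end aux

theorem stmt6 {d : ℕ} (u v : Fin d → ℝ) (hu : u ≠ 0) (hv : v ≠ 0)
    (S₁ S₂ : Matrix (Fin d) (Fin d) ℝ) (hS₂ : S₂ = vecMulVec u v)
    (γ : ℝ) (hγ0 : 0 < γ) (hγ1 : γ < 1)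
    (hbound : ∀ ℓ : ℕ, |v ⬝ᵥ (S₁ ^ ℓ).mulVec u| ≤ γ ^ (ℓ + 1)) :
    ∀ (n : ℕ) (ℓ : Fin n → ℕ),
      specRad ((List.ofFn fun k => S₁ ^ (ℓ k) * S₂).prod) ≤
        ENNReal.ofReal (γ ^ (n + ∑ k, ℓ k)) := by
  have key : ∀ (a : ℕ) (L : List ℕ),
      ((a :: L).map (fun m => S₁ ^ m * S₂)).prod =
        ((L.map (fun m => v ⬝ᵥ (S₁ ^ m).mulVec u)).prod) •
          vecMulVec ((S₁ ^ a).mulVec u) v := by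
    intro a L
    induction L generalizing a with
    | nil => simp [hS₂, matMul_vecMulVec]
    | cons b L ih =>
      have hstep : ((a :: b :: L).map (fun m => S₁ ^ m * S₂)).prod =
          (S₁ ^ a * S₂) * ((b :: L).map (fun m => S₁ ^ m * S₂)).prod := by
        simp [List.map_cons, List.prod_cons]
      rw [hstep, ih b, hS₂, matMul_vecMulVec, Matrix.mul_smul,
        vecMulVec_matMul_vecMulVec]
      rw [smul_smul]
      congr 1
      simp [List.prod_cons]
      ring
  have hlist : ∀ L : List ℕ,
      |(L.map (fun m => v ⬝ᵥ (S₁ ^ m).mulVec u)).prod| ≤ γ ^ (L.length + L.sum) := by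
    intro L
    induction L with
    | nil => simp
    | cons b L ih =>
      rw [List.map_cons, List.prod_cons, abs_mul]
      calc |v ⬝ᵥ (S₁ ^ b).mulVec u| * |(L.map (fun m => v ⬝ᵥ (S₁ ^ m).mulVec u)).prod|
          ≤ γ ^ (b + 1) * γ ^ (L.length + L.sum) :=
            mul_le_mul (hbound b) ih (abs_nonneg _) (pow_nonneg hγ0.le _)
        _ = γ ^ ((b :: L).length + (b :: L).sum) := by
            rw [← pow_add]
            congr 1
            simp [List.length_cons, List.sum_cons]
            omega
  intro n ℓ
  cases n with
  | zero =>
    simp only [List.ofFn_zero, List.prod_nil, Finset.univ_eq_empty, Finset.sum_empty,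
      Nat.zero_add, pow_zero, Nat.add_zero]
    calc specRad (1 : Matrix (Fin d) (Fin d) ℝ) ≤ 1 := specRad_one_le
    _ ≤ ENNReal.ofReal (γ ^ (0 + 0)) := by simp
  | succ m =>
    have hofn : (List.ofFn fun k => S₁ ^ (ℓ k) * S₂) =
        ((List.ofFn ℓ).map (fun m => S₁ ^ m * S₂)) := by
      rw [List.map_ofFn]
      rfl
    have hcons : List.ofFn ℓ = ℓ 0 :: List.ofFn (fun i : Fin m => ℓ i.succ) :=
      List.ofFn_succ (f := ℓ)
    rw [hofn, hcons, key]
    set c : ℝ := ((List.ofFn fun i : Fin m => ℓ i.succ).map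
      (fun m => v ⬝ᵥ (S₁ ^ m).mulVec u)).prod with hc
    have hsmul : c • vecMulVec ((S₁ ^ ℓ 0).mulVec u) v =
        vecMulVec (c • (S₁ ^ ℓ 0).mulVec u) v := by
      ext i j
      simp [vecMulVec_apply, mul_assoc]
    rw [hsmul]
    refine le_trans (specRad_vecMulVec_le _ _) ?_
    have hdot : v ⬝ᵥ (c • (S₁ ^ ℓ 0).mulVec u) = c * (v ⬝ᵥ (S₁ ^ ℓ 0).mulVec u) := by
      simp [dotProduct_smul]
    rw [hdot, abs_mul]
    apply ENNReal.ofReal_le_ofReal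
    have hcbound : |c| ≤ γ ^ (m + ∑ i : Fin m, ℓ i.succ) := by
      have h := hlist (List.ofFn fun i : Fin m => ℓ i.succ)
      rw [List.length_ofFn, List.sum_ofFn] at h
      rw [hc]
      exact h
    calc |c| * |v ⬝ᵥ (S₁ ^ ℓ 0).mulVec u|
        ≤ γ ^ (m + ∑ i : Fin m, ℓ i.succ) * γ ^ (ℓ 0 + 1) :=
          mul_le_mul hcbound (hbound _) (abs_nonneg _) (pow_nonneg hγ0.le _)
      _ = γ ^ (m + 1 + ∑ k, ℓ k) := by
          rw [← pow_add]
          congr 1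
          rw [Fin.sum_univ_succ]
          omega
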